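/- (Learning-rate recursion for the reference-gradient estimator.) Let Q₁ be a contraction compressor with parameter δ₁, let h, v, v' ∈ ℝ^d, let h⁺ = h + Q₁(v − h), and suppose the target switches to v' with probability p (otherwise stays v). Then for any p ∈ (0,1], E‖h⁺ − (target)‖² ≤ (1 − δ₁/2)‖h − v‖² + p(1 + 2p/δ₁)‖v' − v‖², where (target) equals v' with probability p and v with probability 1−p, independently of Q₁'s randomness. -/

import Mathlib

open MeasureTheory

lemma young_norm_sq {E : Type*} [NormedAddCommGroup E] (a b : E) (ε : ℝ) (hε : 0 < ε) :
    ‖a + b‖ ^ 2 ≤ (1 + ε) * ‖a‖ ^ 2 + (1 + 1 / ε) * ‖b‖ ^ 2 := by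
  have h1 : ‖a + b‖ ≤ ‖a‖ + ‖b‖ := norm_add_le a b
  have h2 : (0:ℝ) ≤ ‖a + b‖ := norm_nonneg _
  have h3 : (0:ℝ) ≤ ‖a‖ := norm_nonneg _
  have h4 : (0:ℝ) ≤ ‖b‖ := norm_nonneg _
  have key : (‖a‖ + ‖b‖) ^ 2 ≤ (1 + ε) * ‖a‖ ^ 2 + (1 + 1 / ε) * ‖b‖ ^ 2 := by
    have h5 : 0 ≤ (Real.sqrt ε * ‖a‖ - ‖b‖ / Real.sqrt ε) ^ 2 := sq_nonneg _
    have hs : Real.sqrt ε ^ 2 = ε := Real.sq_sqrt hε.le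
    have hspos : 0 < Real.sqrt ε := Real.sqrt_pos.mpr hε
    have h6 : 2 * ‖a‖ * ‖b‖ ≤ ε * ‖a‖^2 + ‖b‖^2 / ε := by
      have := h5
      rw [sub_sq, div_pow, hs] at this
      have h7 : Real.sqrt ε * ‖a‖ * (‖b‖ / Real.sqrt ε) = ‖a‖ * ‖b‖ := by
        field_simp
      nlinarith [this]
    have h8 : ‖b‖^2 / ε = (1/ε) * ‖b‖^2 := by ring
    nlinarith
  calc ‖a + b‖ ^ 2 ≤ (‖a‖ + ‖b‖) ^ 2 := by nlinarith
    _ ≤ _ := key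

/-- Learning-rate recursion for the reference-gradient estimator: with
`h⁺ = h + Q₁(v − h)` and target switching to `v'` with probability `p`,
`E‖h⁺ − target‖² ≤ (1 − δ₁/2)‖h − v‖² + p(1 + 2p/δ₁)‖v' − v‖²`. -/
theorem reference_gradient_recursion {d : ℕ} {Ω : Type*} [MeasurableSpace Ω]
    (μ : Measure Ω) [IsProbabilityMeasure μ]
    (Q : Ω → EuclideanSpace ℝ (Fin d) → EuclideanSpace ℝ (Fin d))
    (δ₁ : ℝ) (hδ0 : 0 < δ₁) (hδ1 : δ₁ ≤ 1)
    (hQ : ∀ y, (∫ ω, ‖Q ω y - y‖ ^ 2 ∂μ) ≤ (1 - δ₁) * ‖y‖ ^ 2)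
    (p : ℝ) (hp0 : 0 < p) (hp1 : p ≤ 1)
    (h v v' : EuclideanSpace ℝ (Fin d))
    (hint : Integrable (fun ω => ‖h + Q ω (v - h) - v'‖ ^ 2) μ)
    (hint2 : Integrable (fun ω => ‖h + Q ω (v - h) - v‖ ^ 2) μ) :
    p * (∫ ω, ‖h + Q ω (v - h) - v'‖ ^ 2 ∂μ) +
        (1 - p) * (∫ ω, ‖h + Q ω (v - h) - v‖ ^ 2 ∂μ) ≤
      (1 - δ₁ / 2) * ‖h - v‖ ^ 2 + p * (1 + 2 * p / δ₁) * ‖v' - v‖ ^ 2 := by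
  set ε : ℝ := δ₁ / (2 * p) with hεdef
  have hεpos : 0 < ε := div_pos hδ0 (by linarith)
  set a : ℝ := ∫ ω, ‖h + Q ω (v - h) - v‖ ^ 2 ∂μ with ha
  have ha_nonneg : 0 ≤ a :=
    integral_nonneg fun ω => by positivity
  -- contraction bound on a
  have hcontr : a ≤ (1 - δ₁) * ‖h - v‖ ^ 2 := by
    have heq : ∀ ω, h + Q ω (v - h) - v = Q ω (v - h) - (v - h) := by
      intro ω; abel
    have : a = ∫ ω, ‖Q ω (v - h) - (v - h)‖ ^ 2 ∂μ := by
      rw [ha]; congr 1; funext ω; rw [heq]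
    rw [this]
    calc (∫ ω, ‖Q ω (v - h) - (v - h)‖ ^ 2 ∂μ) ≤ (1 - δ₁) * ‖v - h‖ ^ 2 := hQ (v - h)
      _ = (1 - δ₁) * ‖h - v‖ ^ 2 := by rw [norm_sub_rev]
  -- Young bound on the v' integral
  have hA : (∫ ω, ‖h + Q ω (v - h) - v'‖ ^ 2 ∂μ) ≤
      (1 + ε) * a + (1 + 1 / ε) * ‖v' - v‖ ^ 2 := by
    have hpt : ∀ ω, ‖h + Q ω (v - h) - v'‖ ^ 2 ≤
        (1 + ε) * ‖h + Q ω (v - h) - v‖ ^ 2 + (1 + 1 / ε) * ‖v' - v‖ ^ 2 := by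
      intro ω
      have := young_norm_sq (h + Q ω (v - h) - v) (v - v') ε hεpos
      have heq : h + Q ω (v - h) - v + (v - v') = h + Q ω (v - h) - v' := by abel
      rw [heq, norm_sub_rev v v'] at this
      exact this
    calc (∫ ω, ‖h + Q ω (v - h) - v'‖ ^ 2 ∂μ)
        ≤ ∫ ω, ((1 + ε) * ‖h + Q ω (v - h) - v‖ ^ 2 + (1 + 1 / ε) * ‖v' - v‖ ^ 2) ∂μ := by
          apply integral_mono hint
          · exact (hint2.const_mul _).add (integrable_const _)
          · exact hpt
      _ = (1 + ε) * a + (1 + 1 / ε) * ‖v' - v‖ ^ 2 := by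
          rw [integral_add (hint2.const_mul _) (integrable_const _),
            integral_const_mul, integral_const, probReal_univ]
          simp [ha]
  -- combine
  have hε1 : p * ε = δ₁ / 2 := by
    rw [hεdef]; field_simp
  have hε2 : 1 / ε = 2 * p / δ₁ := by
    rw [hεdef]; field_simp
  have hhv : 0 ≤ ‖h - v‖ ^ 2 := by positivity
  have hvv : 0 ≤ ‖v' - v‖ ^ 2 := by positivity
  calc p * (∫ ω, ‖h + Q ω (v - h) - v'‖ ^ 2 ∂μ) + (1 - p) * a
      ≤ p * ((1 + ε) * a + (1 + 1 / ε) * ‖v' - v‖ ^ 2) + (1 - p) * a := by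
        nlinarith [hA]
    _ = (1 + δ₁ / 2) * a + p * (1 + 2 * p / δ₁) * ‖v' - v‖ ^ 2 := by
        rw [hε2]; nlinarith [hε1]
    _ ≤ (1 - δ₁ / 2) * ‖h - v‖ ^ 2 + p * (1 + 2 * p / δ₁) * ‖v' - v‖ ^ 2 := by
        nlinarith [hcontr, ha_nonneg, hhv, sq_nonneg δ₁]
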